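/- Let p be an odd prime, let λ, μ ∈ 𝔽_p be nonzero, take coefficients a = 1, b = λ, c = μ, so that φ(S) = (∑_{x∈S} x)² + λ·(∑_{x∈S} x²) + μ·(∑_{x∈S} x), and set ω₀ = −μ·λ⁻¹. If S is any φ-zero-free multiset over 𝔽_p in which ω₀ occurs with multiplicity at least p − 1, then the cardinality of S is at most (p−1) + (p−1)/2. -/

import Mathlib

/-- `phi a b c S = a·(∑_{x∈S} x)² + b·(∑_{x∈S} x²) + c·(∑_{x∈S} x)`,
sums taken with multiplicity. -/
def phi {p : ℕ} (a b c : ZMod p) (S : Multiset (ZMod p)) : ZMod p :=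
  a * S.sum ^ 2 + b * (S.map (fun x => x ^ 2)).sum + c * S.sum

/-- `S` is φ-zero-free: no nonempty submultiset `T` of `S` has `phi a b c T = 0`. -/
def PhiZeroFree {p : ℕ} (a b c : ZMod p) (S : Multiset (ZMod p)) : Prop :=
  ∀ T : Multiset (ZMod p), T ≤ S → T ≠ 0 → phi a b c T ≠ 0

/-- The set of positive lengths `ℓ` such that every multiset over `ZMod p` of
cardinality at least `ℓ` has a nonempty submultiset `T` with `phi a b c T = 0`.
The Davenport φ-constant `D(φ,p)` is the least element of this set. -/
def DavSet {p : ℕ} (a b c : ZMod p) : Set ℕ :=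
  {ℓ : ℕ | 0 < ℓ ∧ ∀ S : Multiset (ZMod p), ℓ ≤ Multiset.card S →
    ∃ T : Multiset (ZMod p), T ≤ S ∧ T ≠ 0 ∧ phi a b c T = 0}

open Multiset Pointwise in
lemma ssums_card {p : ℕ} (hp : p.Prime) {α : Type*} [DecidableEq α] (M : Multiset α)
    (f : α → ZMod p) (hf : ∀ x ∈ M, f x ≠ 0) :
    min p (Multiset.card M + 1) ≤
      ((M.powerset.map (fun T => (T.map f).sum)).toFinset).card := by
  induction M using Multiset.induction_on with
  | empty => simpa using min_le_right p 1
  | cons a M ih =>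
    have hfa : f a ≠ 0 := hf a (mem_cons_self a M)
    have ih' := ih (fun x hx => hf x (mem_cons_of_mem hx))
    set A : Finset (ZMod p) := (M.powerset.map (fun T => (T.map f).sum)).toFinset with hA
    have hA0 : (0 : ZMod p) ∈ A := by
      simp only [hA, Multiset.mem_toFinset, Multiset.mem_map]
      exact ⟨0, by simp⟩
    have hstep : ((a ::ₘ M).powerset.map (fun T => (T.map f).sum)).toFinset
        = ({0, f a} : Finset (ZMod p)) + A := by
      rw [powerset_cons, Multiset.map_add, Multiset.toFinset_add, Multiset.map_map]
      ext z
      simp only [Finset.mem_union, Multiset.mem_toFinset, Multiset.mem_map, Function.comp,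
        Multiset.map_cons, Multiset.sum_cons, Finset.mem_add, Finset.mem_insert,
        Finset.mem_singleton, hA]
      constructor
      · rintro (⟨T, hT, rfl⟩ | ⟨T, hT, rfl⟩)
        · exact ⟨0, Or.inl rfl, _, ⟨T, hT, rfl⟩, by simp⟩
        · exact ⟨f a, Or.inr rfl, _, ⟨T, hT, rfl⟩, rfl⟩
      · rintro ⟨y, (rfl | rfl), w, ⟨T, hT, rfl⟩, rfl⟩
        · exact Or.inl ⟨T, hT, by simp⟩
        · exact Or.inr ⟨T, hT, rfl⟩
    have hcd := ZMod.cauchy_davenport hp (s := {0, f a}) (t := A)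
      ⟨0, by simp⟩ ⟨0, hA0⟩
    have hB : ({0, f a} : Finset (ZMod p)).card = 2 := by
      rw [Finset.card_insert_of_notMem (by simpa using (Ne.symm hfa)), Finset.card_singleton]
    rw [hstep]
    rw [hB] at hcd
    simp only [Multiset.card_cons]
    omega

lemma sq_card_lb {p : ℕ} (hp : p.Prime) (hodd : Odd p) [NeZero p] :
    (p + 1) / 2 ≤ (Finset.univ.image (fun x : ZMod p => x ^ 2)).card := by
  haveI := Fact.mk hp
  have h2 : (Finset.univ : Finset (ZMod p)).card ≤ 2 *
      (Finset.univ.image (fun x : ZMod p => x ^ 2)).card := by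
    apply Finset.card_le_mul_card_image
    intro a _
    rcases (Finset.univ.filter fun x : ZMod p => x ^ 2 = a).eq_empty_or_nonempty with h | ⟨x, hx⟩
    · simp [h]
    · simp only [Finset.mem_filter] at hx
      have hsub : (Finset.univ.filter fun y : ZMod p => y ^ 2 = a) ⊆ {x, -x} := by
        intro y hy
        simp only [Finset.mem_filter] at hy
        have : y ^ 2 = x ^ 2 := by rw [hy.2, hx.2]
        rcases sq_eq_sq_iff_eq_or_eq_neg.mp this with h | h <;> simp [h]
      calc (Finset.univ.filter fun y : ZMod p => y ^ 2 = a).card ≤ ({x, -x} : Finset (ZMod p)).card :=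
            Finset.card_le_card hsub
        _ ≤ 2 := Finset.card_insert_le _ _ |>.trans (by simp)
  have hcard : (Finset.univ : Finset (ZMod p)).card = p := by
    simp [ZMod.card]
  have hodd' : p % 2 = 1 := Nat.odd_iff.mp hodd
  omega

/-- For an odd prime `p`, nonzero `λ, μ ∈ 𝔽_p`,
`φ(S) = (∑x)² + λ(∑x²) + μ(∑x)` and `ω₀ = -μ·λ⁻¹`, any φ-zero-free multiset `S`
containing `ω₀` with multiplicity at least `p - 1` has cardinality at most
`(p-1) + (p-1)/2`. -/
theorem card_le_of_phiZeroFree_count_omega (p : ℕ) (hp : p.Prime) (hodd : Odd p)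
    (lam mu : ZMod p) (hlam : lam ≠ 0) (hmu : mu ≠ 0)
    (ω₀ : ZMod p) (hω : ω₀ = -(mu * lam⁻¹))
    (S : Multiset (ZMod p)) (hS : PhiZeroFree 1 lam mu S)
    (hcount : p - 1 ≤ S.count ω₀) :
    Multiset.card S ≤ (p - 1) + (p - 1) / 2 := by
  haveI := Fact.mk hp
  have hpodd : p % 2 = 1 := Nat.odd_iff.mp hodd
  have hp3 : 3 ≤ p := by have := hp.two_le; omega
  have hω0 : ω₀ ≠ 0 := by
    rw [hω, neg_ne_zero]
    exact mul_ne_zero hmu (inv_ne_zero hlam)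
  have hlamω : lam * ω₀ = -mu := by
    rw [hω]
    field_simp
  -- Step 1 : count ω₀ ≤ p - 1
  have hcnt : S.count ω₀ ≤ p - 1 := by
    by_contra h
    have hple : p ≤ S.count ω₀ := by omega
    have hle : Multiset.replicate p ω₀ ≤ S := Multiset.le_count_iff_replicate_le.mp hple
    refine hS _ hle ?_ ?_
    · intro h0
      have := congrArg Multiset.card h0
      simp at this
      omega
    · unfold phi
      simp [Multiset.map_replicate, Multiset.sum_replicate, nsmul_eq_mul, ZMod.natCast_self]
  -- decomposition
  classical
  have hdecomp : S.filter (fun x => x = ω₀) + S.filter (fun x => ¬ x = ω₀) = S :=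
    Multiset.filter_add_not _ S
  set S' := S.filter (fun x => ¬ x = ω₀) with hS'def
  have hcard : Multiset.card S = S.count ω₀ + Multiset.card S' := by
    conv_lhs => rw [← hdecomp]
    rw [Multiset.card_add, Multiset.filter_eq', Multiset.card_replicate]
  suffices h : Multiset.card S' ≤ (p - 1) / 2 by omega
  set f : ZMod p → ZMod p := fun x => -(lam * x ^ 2 + mu * x) with hfdef
  have hsum : ∀ T : Multiset (ZMod p),
      (T.map f).sum = -(lam * (T.map (fun x => x ^ 2)).sum + mu * T.sum) := by
    intro T
    induction T using Multiset.induction_on with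
    | empty => simp
    | cons a T ih =>
      simp only [Multiset.map_cons, Multiset.sum_cons, ih]
      simp only [hfdef]
      ring
  have key : ∀ T : Multiset (ZMod p), T ≤ S' → T ≠ 0 → ¬ IsSquare ((T.map f).sum) := by
    rintro T hT hT0 ⟨y, hy⟩
    set k := ((y - T.sum) * ω₀⁻¹).val with hk
    have hkp : k < p := ZMod.val_lt _
    have hkc : (k : ZMod p) * ω₀ = y - T.sum := by
      rw [hk, ZMod.natCast_val, ZMod.cast_id]
      field_simp
    have hrep : Multiset.replicate k ω₀ ≤ S.filter (fun x => x = ω₀) := by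
      rw [Multiset.filter_eq']
      exact (Multiset.replicate_le_replicate ω₀).mpr (by omega)
    have hTT : Multiset.replicate k ω₀ + T ≤ S := by
      calc Multiset.replicate k ω₀ + T ≤
          S.filter (fun x => x = ω₀) + S.filter (fun x => ¬ x = ω₀) := add_le_add hrep hT
        _ = S := hdecomp
    refine hS _ hTT ?_ ?_
    · intro h0
      rw [add_eq_zero] at h0  -- maybe name differs
      exact hT0 h0.2
    · have hq : lam * (T.map (fun x => x ^ 2)).sum + mu * T.sum = -(y * y) := by
        have := hsum T
        rw [hy] at this
        linear_combination this
      unfold phi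
      rw [Multiset.map_add, Multiset.sum_add, Multiset.sum_add, Multiset.map_replicate,
        Multiset.sum_replicate, Multiset.sum_replicate, nsmul_eq_mul, nsmul_eq_mul]
      linear_combination ((k : ZMod p) * ω₀ + T.sum + y) * hkc + ((k : ZMod p) * ω₀) * hlamω + hq
  have hf0 : ∀ x ∈ S', f x ≠ 0 := by
    intro x hx h0
    refine key {x} (Multiset.singleton_le.mpr hx) (by simp) ?_
    rw [Multiset.map_singleton, Multiset.sum_singleton, h0]
    exact ⟨0, (mul_zero 0).symm⟩
  have h1 := ssums_card hp S' f hf0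
  set F := ((S'.powerset.map (fun T => (T.map f).sum)).toFinset) with hF
  set Q := Finset.univ.image (fun x : ZMod p => x ^ 2) with hQ
  have h2 : (p + 1) / 2 ≤ Q.card := sq_card_lb hp hodd
  have hFQ : F ∩ Q ⊆ {0} := by
    intro z hz
    simp only [Finset.mem_inter, hF, hQ, Multiset.mem_toFinset, Multiset.mem_map,
      Multiset.mem_powerset, Finset.mem_image, Finset.mem_univ, true_and,
      Finset.mem_singleton] at hz ⊢
    obtain ⟨⟨T, hT, rfl⟩, ⟨w, hw⟩⟩ := hz
    by_contra h0
    have hT0 : T ≠ 0 := by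
      rintro rfl
      simp at h0
    exact key T hT hT0 ⟨w, by rw [← hw]; ring⟩
  have hunion : (F ∪ Q).card ≤ p := by
    simpa [ZMod.card] using Finset.card_le_univ (F ∪ Q)
  have hiu : (F ∪ Q).card + (F ∩ Q).card = F.card + Q.card :=
    Finset.card_union_add_card_inter F Q
  have hint : (F ∩ Q).card ≤ 1 := by
    calc (F ∩ Q).card ≤ ({0} : Finset (ZMod p)).card := Finset.card_le_card hFQ
      _ = 1 := Finset.card_singleton 0
  omega
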